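/- Let G be the graph obtained from an even cycle v₀v₁...v_{2k−1}v₀ (k ≥ 2) by attaching one pendant leaf u_i to each cycle vertex v_i. Let F : V(G) → 2^{[14]} satisfy |F(v)| ≤ 6 − 2deg(v) for every vertex v, and F(u_i) ∩ F(v_i) = ∅ for every leaf u_i. Then there is an F-avoiding coloring f of G with |f(v)| = 8 − deg(v) for every vertex v (that is, |f(v_i)| = 5 and |f(u_i)| = 7 for all i). -/

import Mathlib

namespace CycleAvoid

/-! ### Core selection lemma machinery (over ℕ indices) -/

section Core

variable (T : ℕ → Finset ℕ)

/-- backward tracking over one step: identity on `T j`, sends the (unique) entering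
element of `T (j+1)` to the (unique) leaving element of `T j`. -/
noncomputable def sig (j : ℕ) (y : ℕ) : ℕ :=
  if y ∈ T j then y
  else if h : (T j \ T (j+1)).Nonempty then (T j \ T (j+1)).min' h else y

/-- `ggF T s j` tracks backwards from time `j` to time `s` (identity if `j ≤ s`). -/
noncomputable def ggF (s : ℕ) : ℕ → ℕ → ℕ
  | 0 => id
  | j+1 => if j+1 ≤ s then id else (ggF s j) ∘ (sig T j)

variable (h4 : ∀ j, (T j).card = 4) (hd : ∀ j, ((T (j+1)) \ T j).card ≤ 1)

include h4 hd in
lemma card_lea (j : ℕ) : (T j \ T (j+1)).card = (T (j+1) \ T j).card := by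
  have h1 := Finset.card_inter_add_card_sdiff (T j) (T (j+1))
  have h2 := Finset.card_inter_add_card_sdiff (T (j+1)) (T j)
  rw [Finset.inter_comm] at h2
  have e1 := h4 j
  have e2 := h4 (j+1)
  omega

lemma sig_mem_of_mem {j y : ℕ} (hy : y ∈ T j) : sig T j y = y := by
  simp [sig, hy]

include h4 hd in
lemma sig_maps {j y : ℕ} (hy : y ∈ T (j+1)) : sig T j y ∈ T j := by
  unfold sig
  by_cases h : y ∈ T j
  · simp [h]
  · have hne : (T (j+1) \ T j).Nonempty := ⟨y, Finset.mem_sdiff.2 ⟨hy, h⟩⟩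
    have : (T j \ T (j+1)).Nonempty := by
      rw [← Finset.card_pos, card_lea T h4 hd j, Finset.card_pos]; exact hne
    simp only [h, if_false, this, dif_pos]
    exact Finset.sdiff_subset (Finset.min'_mem _ this)

include h4 hd in
lemma sig_injOn {j : ℕ} : Set.InjOn (sig T j) (T (j+1)) := by
  intro y1 hy1 y2 hy2 heq
  simp only [Finset.coe_mem, Finset.mem_coe] at hy1 hy2
  by_cases h1 : y1 ∈ T j <;> by_cases h2 : y2 ∈ T j
  · rwa [sig_mem_of_mem T h1, sig_mem_of_mem T h2] at heq
  · exfalso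
    rw [sig_mem_of_mem T h1] at heq
    have hne : (T j \ T (j+1)).Nonempty := by
      rw [← Finset.card_pos, card_lea T h4 hd j, Finset.card_pos]
      exact ⟨y2, Finset.mem_sdiff.2 ⟨hy2, h2⟩⟩
    have : sig T j y2 ∈ T j \ T (j+1) := by
      simp only [sig, h2, if_false, hne, dif_pos]
      exact Finset.min'_mem _ hne
    rw [← heq] at this
    exact (Finset.mem_sdiff.1 this).2 hy1
  · exfalso
    rw [sig_mem_of_mem T h2] at heq
    have hne : (T j \ T (j+1)).Nonempty := by
      rw [← Finset.card_pos, card_lea T h4 hd j, Finset.card_pos]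
      exact ⟨y1, Finset.mem_sdiff.2 ⟨hy1, h1⟩⟩
    have : sig T j y1 ∈ T j \ T (j+1) := by
      simp only [sig, h1, if_false, hne, dif_pos]
      exact Finset.min'_mem _ hne
    rw [heq] at this
    exact (Finset.mem_sdiff.1 this).2 hy2
  · -- both entering: card of entering set ≤ 1
    have hcard := hd j
    have m1 : y1 ∈ T (j+1) \ T j := Finset.mem_sdiff.2 ⟨hy1, h1⟩
    have m2 : y2 ∈ T (j+1) \ T j := Finset.mem_sdiff.2 ⟨hy2, h2⟩
    exact Finset.card_le_one.1 hcard _ m1 _ m2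

end Core

section Core2

variable (T : ℕ → Finset ℕ)

lemma ggF_of_le {s j : ℕ} (h : j ≤ s) : ggF T s j = id := by
  cases j with
  | zero => rfl
  | succ j => simp [ggF, h]

lemma ggF_succ_of_lt {s j : ℕ} (h : s < j + 1) : ggF T s (j+1) = (ggF T s j) ∘ (sig T j) := by
  have : ¬ (j + 1 ≤ s) := by omega
  simp [ggF, this]

variable (h4 : ∀ j, (T j).card = 4) (hd : ∀ j, ((T (j+1)) \ T j).card ≤ 1)

include h4 hd in
lemma ggF_maps {s j : ℕ} (hsj : s ≤ j) : ∀ y ∈ T j, ggF T s j y ∈ T s := by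
  induction j with
  | zero => intro y hy
            have : s = 0 := Nat.le_zero.1 hsj
            subst this
            simpa [ggF_of_le T (le_refl 0)] using hy
  | succ j ih =>
      intro y hy
      rcases Nat.lt_or_ge s (j+1) with h | h
      · rw [ggF_succ_of_lt T h]
        exact ih (by omega) _ (sig_maps T h4 hd hy)
      · have : s = j + 1 := by omega
        subst this
        simpa [ggF_of_le T (le_refl _)] using hy

include h4 hd in
lemma ggF_injOn {s j : ℕ} (hsj : s ≤ j) : Set.InjOn (ggF T s j) (T j) := by
  induction j with
  | zero => intro y1 _ y2 _ h
            simpa [ggF_of_le T (Nat.zero_le s)] using h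
  | succ j ih =>
      rcases Nat.lt_or_ge s (j+1) with h | h
      · rw [ggF_succ_of_lt T h]
        intro y1 hy1 y2 hy2 heq
        simp only [Function.comp] at heq
        have m1 : sig T j y1 ∈ T j := sig_maps T h4 hd (by simpa using hy1)
        have m2 : sig T j y2 ∈ T j := sig_maps T h4 hd (by simpa using hy2)
        exact sig_injOn T h4 hd hy1 hy2 (ih (by omega) m1 m2 heq)
      · have : s = j + 1 := by omega
        subst this
        intro y1 _ y2 _ h
        simpa [ggF_of_le T (le_refl _)] using h

include h4 hd in
lemma ggF_image {s j : ℕ} (hsj : s ≤ j) : (T j).image (ggF T s j) = T s := by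
  apply Finset.eq_of_subset_of_card_le
  · intro z hz
    rcases Finset.mem_image.1 hz with ⟨y, hy, rfl⟩
    exact ggF_maps T h4 hd hsj y hy
  · rw [Finset.card_image_of_injOn (ggF_injOn T h4 hd hsj), h4, h4]

include h4 hd in
lemma ggF_comp {s j : ℕ} (hsj : s ≤ j) : ∀ y ∈ T j, ggF T 0 j y = ggF T 0 s (ggF T s j y) := by
  induction j with
  | zero => intro y hy
            have : s = 0 := Nat.le_zero.1 hsj
            subst this
            simp [ggF_of_le T (le_refl 0)]
  | succ j ih =>
      intro y hy
      rcases Nat.lt_or_ge s (j+1) with h | h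
      · rw [ggF_succ_of_lt T h, ggF_succ_of_lt T (by omega)]
        exact ih (by omega) _ (sig_maps T h4 hd hy)
      · have : s = j + 1 := by omega
        subst this
        simp [ggF_of_le T (le_refl _)]

lemma ggF_fix {s j : ℕ} {z : ℕ} (hz : ∀ i, s ≤ i → i < j → z ∈ T i) : ggF T s j z = z := by
  induction j with
  | zero => simp [ggF]
  | succ j ih =>
      rcases Nat.lt_or_ge s (j+1) with h | h
      · rw [ggF_succ_of_lt T h, Function.comp_apply,
          sig_mem_of_mem T (hz j (by omega) (by omega))]
        exact ih (fun i h1 h2 => hz i h1 (by omega))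
      · simp [ggF_of_le T h]

include h4 hd in
lemma filter_preim_card {s j : ℕ} (hsj : s ≤ j) {W : Finset ℕ} (hW : W ⊆ T s) :
    ((T j).filter (fun y => ggF T s j y ∈ W)).card = W.card := by
  apply Finset.card_bij (fun y _ => ggF T s j y)
  · intro y hy
    exact (Finset.mem_filter.1 hy).2
  · intro y1 hy1 y2 hy2 heq
    exact ggF_injOn T h4 hd hsj (Finset.mem_filter.1 hy1).1 (Finset.mem_filter.1 hy2).1 heq
  · intro z hz
    have : z ∈ (T j).image (ggF T s j) := by rw [ggF_image T h4 hd hsj]; exact hW hz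
    rcases Finset.mem_image.1 this with ⟨y, hy, rfl⟩
    exact ⟨y, Finset.mem_filter.2 ⟨hy, hz⟩, rfl⟩

end Core2

section Traj

variable (T : ℕ → Finset ℕ) (t : ℕ) (S0 V : Finset ℕ)

/-- the trajectory: pure from `S0` up to time `t`, then from `V` (at time `t+1`) onward. -/
noncomputable def Strj (j : ℕ) : Finset ℕ :=
  if j ≤ t then (T j).filter (fun y => ggF T 0 j y ∈ S0)
  else (T j).filter (fun y => ggF T (t+1) j y ∈ V)

/-- the selection: `Strj` at even times, its complement at odd times. -/
noncomputable def Asel (j : ℕ) : Finset ℕ :=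
  if Even j then Strj T t S0 V j else T j \ Strj T t S0 V j

lemma strj_subset (j : ℕ) : Strj T t S0 V j ⊆ T j := by
  unfold Strj; split <;> exact Finset.filter_subset _ _

lemma asel_subset (j : ℕ) : Asel T t S0 V j ⊆ T j := by
  unfold Asel; split
  · exact strj_subset T t S0 V j
  · exact Finset.sdiff_subset

variable (h4 : ∀ j, (T j).card = 4) (hd : ∀ j, ((T (j+1)) \ T j).card ≤ 1)

include h4 hd in
lemma strj_step {j : ℕ} (hj : j ≠ t) {y : ℕ} (hy : y ∈ T j) (hy' : y ∈ T (j+1)) :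
    (y ∈ Strj T t S0 V j ↔ y ∈ Strj T t S0 V (j+1)) := by
  rcases Nat.lt_or_ge j t with h | h
  · have e1 : j ≤ t := le_of_lt h
    have e2 : j + 1 ≤ t := h
    unfold Strj
    rw [if_pos e1, if_pos e2]
    have : ggF T 0 (j+1) y = ggF T 0 j y := by
      rw [ggF_succ_of_lt T (by omega), Function.comp_apply, sig_mem_of_mem T hy]
    simp [Finset.mem_filter, hy, hy', this]
  · have h' : t < j := lt_of_le_of_ne h (Ne.symm hj)
    have e1 : ¬ (j ≤ t) := by omega
    have e2 : ¬ (j + 1 ≤ t) := by omega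
    unfold Strj
    rw [if_neg e1, if_neg e2]
    have : ggF T (t+1) (j+1) y = ggF T (t+1) j y := by
      rw [ggF_succ_of_lt T (by omega), Function.comp_apply, sig_mem_of_mem T hy]
    simp [Finset.mem_filter, hy, hy', this]

include h4 hd in
lemma asel_disj {j : ℕ} (hj : j ≠ t) :
    Disjoint (Asel T t S0 V j) (Asel T t S0 V (j+1)) := by
  rw [Finset.disjoint_left]
  intro y hyj hyj1
  by_cases he : Even j
  · have ho : ¬ Even (j+1) := by simp [Nat.even_add_one, he]
    rw [Asel, if_pos he] at hyj
    rw [Asel, if_neg ho] at hyj1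
    rcases Finset.mem_sdiff.1 hyj1 with ⟨hmem, hnot⟩
    exact hnot (((strj_step T t S0 V h4 hd hj (strj_subset T t S0 V j hyj) hmem)).1 hyj)
  · have ho : Even (j+1) := Nat.even_add_one.2 he
    rw [Asel, if_neg he] at hyj
    rw [Asel, if_pos ho] at hyj1
    rcases Finset.mem_sdiff.1 hyj with ⟨hmem, hnot⟩
    exact hnot (((strj_step T t S0 V h4 hd hj hmem (strj_subset T t S0 V _ hyj1))).2 hyj1)

include h4 hd in
lemma strj_card_lo {j : ℕ} (hj : j ≤ t) (hS0 : S0 ⊆ T 0) :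
    (Strj T t S0 V j).card = S0.card := by
  rw [Strj, if_pos hj]
  exact filter_preim_card T h4 hd (Nat.zero_le _) hS0

include h4 hd in
lemma strj_card_hi {j : ℕ} (hj : t < j) (hV : V ⊆ T (t+1)) :
    (Strj T t S0 V j).card = V.card := by
  rw [Strj, if_neg (by omega)]
  exact filter_preim_card T h4 hd (by omega) hV

include h4 hd in
lemma asel_card {j : ℕ} (hS0 : S0 ⊆ T 0) (hV : V ⊆ T (t+1))
    (hcS : S0.card = 2) (hcV : V.card = 2) : (Asel T t S0 V j).card = 2 := by
  have hstrj : (Strj T t S0 V j).card = 2 := by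
    rcases le_or_gt j t with h | h
    · rw [strj_card_lo T t S0 V h4 hd h hS0, hcS]
    · rw [strj_card_hi T t S0 V h4 hd h hV, hcV]
  rw [Asel]; split
  · exact hstrj
  · rw [Finset.card_sdiff_of_subset (strj_subset T t S0 V j), h4, hstrj]

end Traj

section Drift

variable (T : ℕ → Finset ℕ)

lemma drift_select (n : ℕ) (hne : Even n) (hn1 : 0 < n) (hTn : T n = T 0)
    (h4 : ∀ j, (T j).card = 4) (hd : ∀ j, ((T (j+1)) \ T j).card ≤ 1) :
    ∃ A : ℕ → Finset ℕ, (∀ j, A j ⊆ T j) ∧ (∀ j, (A j).card = 2) ∧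
      (∀ j, j < n → Disjoint (A j) (A (j+1))) ∧ A n = A 0 := by
  by_cases hinv : ∃ S : Finset ℕ, S ⊆ T 0 ∧ S.card = 2 ∧
      (∀ y ∈ T 0, ggF T 0 n y ∈ S ↔ y ∈ S)
  · -- pure case
    obtain ⟨S, hSsub, hScard, hS⟩ := hinv
    obtain ⟨V, hVsub, hVcard⟩ := Finset.exists_subset_card_eq (show 2 ≤ (T (n+1)).card by rw [h4]; omega)
    refine ⟨Asel T n S V, fun j => asel_subset T n S V j,
      fun j => asel_card T n S V h4 hd hSsub hVsub hScard hVcard,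
      fun j hj => asel_disj T n S V h4 hd (by omega), ?_⟩
    have h0 : Asel T n S V 0 = S := by
      rw [Asel, if_pos Even.zero, Strj, if_pos (Nat.zero_le n)]
      ext y
      simp only [Finset.mem_filter, ggF_of_le T (le_refl 0), id_eq]
      exact ⟨fun h => h.2, fun h => ⟨hSsub h, h⟩⟩
    have h1 : Asel T n S V n = S := by
      rw [Asel, if_pos hne, Strj, if_pos (le_refl n)]
      ext y
      simp only [Finset.mem_filter]
      constructor
      · rintro ⟨hy, hy2⟩
        exact (hS y (hTn ▸ hy)).1 hy2
      · intro hy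
        have hy0 : y ∈ T 0 := hSsub hy
        exact ⟨hTn ▸ hy0, (hS y hy0).2 hy⟩
    rw [h0, h1]
  · -- find z with gg z ≠ z and gg (gg z) ≠ z
    have hz : ∃ z ∈ T 0, ggF T 0 n z ≠ z ∧ ggF T 0 n (ggF T 0 n z) ≠ z := by
      by_contra hcon
      push_neg at hcon
      apply hinv
      by_cases hfix : ∃ z0 ∈ T 0, ggF T 0 n z0 ≠ z0
      · obtain ⟨z0, hz0, hz0ne⟩ := hfix
        have h2 : ggF T 0 n (ggF T 0 n z0) = z0 := (hcon z0 hz0) hz0ne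
        have hgz0 : ggF T 0 n z0 ∈ T 0 := ggF_maps T h4 hd (Nat.zero_le n) z0 (hTn ▸ hz0)
        refine ⟨{z0, ggF T 0 n z0}, ?_, ?_, ?_⟩
        · intro y hy
          rcases Finset.mem_insert.1 hy with rfl | hy
          · exact hz0
          · rw [Finset.mem_singleton.1 hy]; exact hgz0
        · rw [Finset.card_insert_of_notMem (by simp [Ne.symm hz0ne]), Finset.card_singleton]
        · intro y hy
          have hinj := ggF_injOn T h4 hd (Nat.zero_le n) (s := 0)
          constructor
          · intro hmem
            rcases Finset.mem_insert.1 hmem with he | he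
            · -- gg y = z0 = gg (gg z0) → y = gg z0
              have : y = ggF T 0 n z0 := by
                apply hinj (by rwa [hTn]) (by rwa [hTn])
                rw [he, h2]
              simp [this]
            · -- gg y = gg z0 → y = z0
              rw [Finset.mem_singleton] at he
              have : y = z0 := hinj (by rwa [hTn]) (by rwa [hTn]) he
              simp [this]
          · intro hmem
            rcases Finset.mem_insert.1 hmem with rfl | he
            · exact Finset.mem_insert_of_mem (Finset.mem_singleton_self _)
            · rw [Finset.mem_singleton] at he
              rw [he, h2]
              exact Finset.mem_insert_self _ _
      · push_neg at hfix
        obtain ⟨S, hSsub, hScard⟩ := Finset.exists_subset_card_eq (show 2 ≤ (T 0).card by rw [h4]; omega)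
        exact ⟨S, hSsub, hScard, fun y hy => by rw [hfix y hy]⟩
    obtain ⟨z, hz0, hz1, hz2⟩ := hz
    set G := ggF T 0 n with hG
    have hGinj : Set.InjOn G (T n) := ggF_injOn T h4 hd (Nat.zero_le n)
    have hzn : z ∈ T n := by rw [hTn]; exact hz0
    set a := G z with haDef
    have ha0 : a ∈ T 0 := ggF_maps T h4 hd (Nat.zero_le n) z hzn
    have han : a ∈ T n := by rw [hTn]; exact ha0
    set ga := G a with hgaDef
    have hga0 : ga ∈ T 0 := ggF_maps T h4 hd (Nat.zero_le n) a han
    have hgan : ga ∈ T n := by rw [hTn]; exact hga0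
    set g2a := G ga with hg2aDef
    have hg2a0 : g2a ∈ T 0 := ggF_maps T h4 hd (Nat.zero_le n) ga hgan
    have hza : z ≠ a := Ne.symm hz1
    have hgaz : ga ≠ z := hz2
    have haga : a ≠ ga := by
      intro h
      refine hza (hGinj hzn han ?_)
      rw [← haDef]; exact h
    have hg2a_a : g2a ≠ a := by
      intro h
      refine hgaz (hGinj hgan hzn ?_)
      rw [← hg2aDef, ← haDef]; exact h
    have hg2a_ga : g2a ≠ ga := by
      intro h
      refine haga (hGinj han hgan ?_)
      rw [← hgaDef, ← hg2aDef]; exact h.symm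
    -- the time t of the final entry of z
    have hJ : ((Finset.range n).filter (fun j => z ∉ T j)).Nonempty := by
      rw [Finset.filter_nonempty_iff]
      by_contra hcon
      push_neg at hcon
      exact hz1 (ggF_fix T (fun i _ hi => hcon i (Finset.mem_range.2 hi) ))
    set t := ((Finset.range n).filter (fun j => z ∉ T j)).max' hJ with htDef
    have htmem := Finset.mem_filter.1 (((Finset.range n).filter (fun j => z ∉ T j)).max'_mem hJ)
    have htn : t < n := Finset.mem_range.1 htmem.1
    have hzt : z ∉ T t := htmem.2
    have hzin : ∀ j, t < j → j ≤ n → z ∈ T j := by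
      intro j h1 h2
      rcases Nat.lt_or_ge j n with h | h
      · by_contra hcon
        have : j ∈ (Finset.range n).filter (fun j => z ∉ T j) :=
          Finset.mem_filter.2 ⟨Finset.mem_range.2 h, hcon⟩
        have := Finset.le_max' _ j this
        omega
      · have : j = n := by omega
        rw [this, hTn]; exact hz0
    have hzt1 : z ∈ T (t+1) := hzin (t+1) (by omega) (by omega)
    -- tracking from t+1
    have hHz : ggF T (t+1) n z = z := ggF_fix T (fun i h1 h2 => hzin i h1 (by omega))
    have hHinj : Set.InjOn (ggF T (t+1) n) (T n) := ggF_injOn T h4 hd (by omega)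
    have hcompz : ∀ y ∈ T n, G y = ggF T 0 (t+1) (ggF T (t+1) n y) :=
      fun y hy => ggF_comp T h4 hd (by omega) y hy
    have hgt1z : ggF T 0 (t+1) z = a := by
      have := hcompz z (hTn ▸ hz0)
      rw [hHz] at this
      exact this.symm
    -- the leaving element u at time t
    have hleane : (T t \ T (t+1)).Nonempty := by
      rw [← Finset.card_pos, card_lea T h4 hd t, Finset.card_pos]
      exact ⟨z, Finset.mem_sdiff.2 ⟨hzt1, hzt⟩⟩
    set u := (T t \ T (t+1)).min' hleane with huDef
    have humem := Finset.mem_sdiff.1 ((T t \ T (t+1)).min'_mem hleane)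
    have hsigz : sig T t z = u := by
      rw [sig, if_neg hzt, dif_pos hleane]
    have hgtu : ggF T 0 t u = a := by
      have := hgt1z
      rwa [ggF_succ_of_lt T (by omega), Function.comp_apply, hsigz] at this
    -- entering set at time t is {z}
    have hent : ∀ w ∈ T (t+1), w ∉ T t → w = z := by
      intro w hw hw2
      exact Finset.card_le_one.1 (hd t) w (Finset.mem_sdiff.2 ⟨hw, hw2⟩) z
        (Finset.mem_sdiff.2 ⟨hzt1, hzt⟩)
    -- the element c
    set c := ggF T (t+1) n ga with hcDef
    have hct1 : c ∈ T (t+1) := ggF_maps T h4 hd (by omega) ga (hTn ▸ hga0)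
    have hcz : c ≠ z := by
      intro h
      exact hgaz (hHinj (hTn ▸ hga0) (hTn ▸ hz0) (h.trans hHz.symm))
    have hct : c ∈ T t := by
      by_contra hcon
      exact hcz (hent c hct1 hcon)
    have hgtc : ggF T 0 t c = g2a := by
      have h1 := hcompz ga (hTn ▸ hga0)
      rw [← hcDef] at h1
      rw [ggF_succ_of_lt T (by omega), Function.comp_apply, sig_mem_of_mem T hct] at h1
      exact h1.symm
    rcases Nat.even_or_odd t with hte | hto
    · -- t even : S0 = {a, ga}, V = F0 ∪ {c}
      set S0 : Finset ℕ := {a, ga} with hS0Def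
      have hS0sub : S0 ⊆ T 0 := by
        intro y hy
        rcases Finset.mem_insert.1 hy with rfl | hy
        · exact ha0
        · rw [Finset.mem_singleton.1 hy]; exact hga0
      have hS0card : S0.card = 2 := by
        rw [Finset.card_insert_of_notMem (by simp [haga]), Finset.card_singleton]
      set P := (T t).filter (fun y => ggF T 0 t y ∈ S0) with hPDef
      have hPcard : P.card = 2 := by
        rw [hPDef, filter_preim_card T h4 hd (Nat.zero_le t) hS0sub, hS0card]
      have hlea1 : T t \ T (t+1) = {u} := by
        apply Finset.eq_singleton_iff_unique_mem.2
        refine ⟨(T t \ T (t+1)).min'_mem hleane, fun x hx => ?_⟩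
        have hcard1 : (T t \ T (t+1)).card ≤ 1 := by
          rw [card_lea T h4 hd t]; exact hd t
        exact Finset.card_le_one.1 hcard1 x hx u ((T t \ T (t+1)).min'_mem hleane)
      have hmemt1 : ∀ w ∈ T t, (w ∈ T (t+1) ↔ w ≠ u) := by
        intro w hw
        constructor
        · rintro hw1 rfl; exact humem.2 hw1
        · intro hne
          by_contra hcon
          have : w ∈ T t \ T (t+1) := Finset.mem_sdiff.2 ⟨hw, hcon⟩
          rw [hlea1, Finset.mem_singleton] at this
          exact hne this
      set F0 := (T t ∩ T (t+1)).filter (fun y => ggF T 0 t y ∈ S0) with hF0Def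
      have hF0 : F0 = P.erase u := by
        ext w
        simp only [hF0Def, hPDef, Finset.mem_filter, Finset.mem_erase, Finset.mem_inter]
        constructor
        · rintro ⟨⟨h1, h2⟩, h3⟩
          exact ⟨(hmemt1 w h1).1 h2, h1, h3⟩
        · rintro ⟨h1, h2, h3⟩
          exact ⟨⟨h2, (hmemt1 w h2).2 h1⟩, h3⟩
      have huP : u ∈ P := by
        rw [hPDef, Finset.mem_filter]
        exact ⟨humem.1, by rw [hgtu]; exact Finset.mem_insert_self _ _⟩
      have hF0card : F0.card = 1 := by
        rw [hF0, Finset.card_erase_of_mem huP, hPcard]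
      have hcF0 : c ∉ F0 := by
        rw [hF0Def, Finset.mem_filter]
        rintro ⟨-, hc2⟩
        rw [hgtc] at hc2
        rcases Finset.mem_insert.1 hc2 with h | h
        · exact hg2a_a h
        · exact hg2a_ga (Finset.mem_singleton.1 h)
      set V := F0 ∪ {c} with hVDef
      have hVsub : V ⊆ T (t+1) := by
        intro y hy
        rcases Finset.mem_union.1 hy with hy | hy
        · exact (Finset.mem_inter.1 (Finset.filter_subset _ _ hy)).2
        · rw [Finset.mem_singleton.1 hy]; exact hct1
      have hVcard : V.card = 2 := by
        rw [hVDef, Finset.card_union_of_disjoint (by simp [hcF0]), hF0card,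
          Finset.card_singleton]
      -- edge t disjointness
      have hStrjt : Strj T t S0 V t = P := by rw [Strj, if_pos (le_refl t)]
      have hStrjt1 : Strj T t S0 V (t+1) = V := by
        rw [Strj, if_neg (by omega)]
        ext y
        simp only [Finset.mem_filter, ggF_of_le T (le_refl (t+1)), id]
        exact ⟨fun h => h.2, fun h => ⟨hVsub h, h⟩⟩
      have hedget : Disjoint (Asel T t S0 V t) (Asel T t S0 V (t+1)) := by
        rw [Asel, Asel, if_pos hte, if_neg (by simp [Nat.even_add_one, hte]),
          hStrjt, hStrjt1, Finset.disjoint_left]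
        intro y hyP hyc
        rcases Finset.mem_sdiff.1 hyc with ⟨hy1, hy2⟩
        apply hy2
        apply Finset.mem_union_left
        rw [hF0Def, Finset.mem_filter]
        exact ⟨Finset.mem_inter.2 ⟨((Finset.mem_filter.1 hyP).1), hy1⟩,
          (Finset.mem_filter.1 hyP).2⟩
      -- the win condition
      have hwin : ∀ y ∈ T 0, (ggF T (t+1) n y ∈ V ↔ y ∈ S0) := by
        intro y hy0
        have hyn : y ∈ T n := hTn ▸ hy0
        set Hy := ggF T (t+1) n y with hHyDef
        have hHyt1 : Hy ∈ T (t+1) := ggF_maps T h4 hd (by omega) y hyn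
        have hHyz : Hy = z ↔ y = z := by
          constructor
          · intro h; exact hHinj hyn (hTn ▸ hz0) (h.trans hHz.symm)
          · rintro rfl; exact hHz
        have hHyc : Hy = c ↔ y = ga := by
          constructor
          · intro h; exact hHinj hyn (hTn ▸ hga0) h
          · rintro rfl; rfl
        have hHyF0 : Hy ∈ F0 ↔ (y ≠ z ∧ G y ∈ S0) := by
          rw [hF0Def, Finset.mem_filter, Finset.mem_inter]
          constructor
          · rintro ⟨⟨h1, h2⟩, h3⟩
            have hHne : Hy ≠ z := fun hcon => hzt (hcon ▸ h1)
            refine ⟨fun hcon => hHne (hHyz.2 hcon), ?_⟩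
            rw [hcompz y hyn, ← hHyDef, ggF_succ_of_lt T (by omega),
              Function.comp_apply, sig_mem_of_mem T h1]
            exact h3
          · rintro ⟨h1, h2⟩
            have hHne : Hy ≠ z := fun hcon => h1 (hHyz.1 hcon)
            have hHyt : Hy ∈ T t := by
              by_contra hcon
              exact hHne (hent Hy hHyt1 hcon)
            refine ⟨⟨hHyt, hHyt1⟩, ?_⟩
            rw [hcompz y hyn, ← hHyDef, ggF_succ_of_lt T (by omega),
              Function.comp_apply, sig_mem_of_mem T hHyt] at h2
            exact h2
        rw [hVDef, Finset.mem_union, Finset.mem_singleton, hHyF0, hHyc]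
        constructor
        · rintro (⟨h1, h2⟩ | h)
          · rcases Finset.mem_insert.1 h2 with h | h
            · exact absurd (hGinj hyn (hTn ▸ hz0) h) h1
            · rw [Finset.mem_singleton] at h
              have : y = a := hGinj hyn (hTn ▸ ha0) h
              rw [this]; exact Finset.mem_insert_self _ _
          · rw [h]; exact Finset.mem_insert_of_mem (Finset.mem_singleton_self _)
        · intro hyS0
          rcases Finset.mem_insert.1 hyS0 with rfl | h
          · left
            exact ⟨Ne.symm hza, Finset.mem_insert_of_mem (Finset.mem_singleton_self _)⟩
          · right; exact Finset.mem_singleton.1 h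
      -- assemble
      refine ⟨Asel T t S0 V, fun j => asel_subset T t S0 V j,
        fun j => asel_card T t S0 V h4 hd hS0sub hVsub hS0card hVcard, ?_, ?_⟩
      · intro j hj
        rcases eq_or_ne j t with rfl | hne
        · exact hedget
        · exact asel_disj T t S0 V h4 hd hne
      · have h0 : Asel T t S0 V 0 = S0 := by
          rw [Asel, if_pos Even.zero, Strj, if_pos (Nat.zero_le t)]
          ext y
          simp only [Finset.mem_filter, ggF_of_le T (le_refl 0), id_eq]
          exact ⟨fun h => h.2, fun h => ⟨hS0sub h, h⟩⟩
        have h1 : Asel T t S0 V n = S0 := by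
          rw [Asel, if_pos hne, Strj, if_neg (by omega)]
          ext y
          simp only [Finset.mem_filter]
          constructor
          · rintro ⟨hy, hy2⟩
            exact (hwin y (hTn ▸ hy)).1 hy2
          · intro hy
            have hy0 : y ∈ T 0 := hS0sub hy
            exact ⟨hTn ▸ hy0, (hwin y hy0).2 hy⟩
        rw [h0, h1]
    · -- t odd : S0 = T 0 \ {a, ga}, V = (P.erase c) ∪ {z}
      have hnte : ¬ Even t := by simp [Nat.even_iff, Nat.odd_iff.1 hto]
      set S0 : Finset ℕ := T 0 \ {a, ga} with hS0Def
      have hS0sub : S0 ⊆ T 0 := Finset.sdiff_subset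
      have hS0card : S0.card = 2 := by
        rw [hS0Def, Finset.card_sdiff_of_subset, h4]
        · rw [Finset.card_insert_of_notMem (by simp [haga]), Finset.card_singleton]
        · intro y hy
          rcases Finset.mem_insert.1 hy with rfl | hy
          · exact ha0
          · rw [Finset.mem_singleton.1 hy]; exact hga0
      have haS0 : a ∉ S0 := by simp [hS0Def]
      have hgaS0 : ga ∉ S0 := by simp [hS0Def]
      have hg2aS0 : g2a ∈ S0 := by
        rw [hS0Def, Finset.mem_sdiff]
        exact ⟨hg2a0, by simp [hg2a_a, hg2a_ga]⟩
      have hzS0 : z ∈ S0 := by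
        rw [hS0Def, Finset.mem_sdiff]
        refine ⟨hz0, ?_⟩
        simp only [Finset.mem_insert, Finset.mem_singleton]
        rintro (h | h)
        · exact hza h
        · exact hgaz h.symm
      set P := (T t).filter (fun y => ggF T 0 t y ∈ S0) with hPDef
      have hPcard : P.card = 2 := by
        rw [hPDef, filter_preim_card T h4 hd (Nat.zero_le t) hS0sub, hS0card]
      have hlea1 : T t \ T (t+1) = {u} := by
        apply Finset.eq_singleton_iff_unique_mem.2
        refine ⟨(T t \ T (t+1)).min'_mem hleane, fun x hx => ?_⟩
        have hcard1 : (T t \ T (t+1)).card ≤ 1 := by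
          rw [card_lea T h4 hd t]; exact hd t
        exact Finset.card_le_one.1 hcard1 x hx u ((T t \ T (t+1)).min'_mem hleane)
      have hmemt1 : ∀ w ∈ T t, (w ∈ T (t+1) ↔ w ≠ u) := by
        intro w hw
        constructor
        · rintro hw1 rfl; exact humem.2 hw1
        · intro hne
          by_contra hcon
          have : w ∈ T t \ T (t+1) := Finset.mem_sdiff.2 ⟨hw, hcon⟩
          rw [hlea1, Finset.mem_singleton] at this
          exact hne this
      have huP : u ∉ P := by
        rw [hPDef, Finset.mem_filter, hgtu]
        rintro ⟨-, hmem⟩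
        exact haS0 hmem
      have hPsubt1 : P ⊆ T (t+1) := by
        intro w hw
        have hw' := Finset.mem_filter.1 hw
        refine (hmemt1 w hw'.1).2 (fun hcon => ?_)
        rw [hcon] at hw
        exact huP hw
      have hcP : c ∈ P := by
        rw [hPDef, Finset.mem_filter, hgtc]
        exact ⟨hct, hg2aS0⟩
      have hzP : z ∉ P := fun h => hzt (Finset.mem_filter.1 h).1
      set V := (P.erase c) ∪ {z} with hVDef
      have hVsub : V ⊆ T (t+1) := by
        intro y hy
        rcases Finset.mem_union.1 hy with hy | hy
        · exact hPsubt1 (Finset.erase_subset _ _ hy)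
        · rw [Finset.mem_singleton.1 hy]; exact hzt1
      have hVcard : V.card = 2 := by
        have hzE : z ∉ P.erase c := fun h => hzP (Finset.erase_subset _ _ h)
        rw [hVDef, Finset.card_union_of_disjoint (by simp [hzE]),
          Finset.card_erase_of_mem hcP, hPcard, Finset.card_singleton]
      have hStrjt : Strj T t S0 V t = P := by rw [Strj, if_pos (le_refl t)]
      have hStrjt1 : Strj T t S0 V (t+1) = V := by
        rw [Strj, if_neg (by omega)]
        ext y
        simp only [Finset.mem_filter, ggF_of_le T (le_refl (t+1)), id]
        exact ⟨fun h => h.2, fun h => ⟨hVsub h, h⟩⟩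
      have hedget : Disjoint (Asel T t S0 V t) (Asel T t S0 V (t+1)) := by
        rw [Asel, Asel, if_neg hnte, if_pos (Nat.even_add_one.2 hnte),
          hStrjt, hStrjt1, Finset.disjoint_left]
        intro y hyP hyV
        rcases Finset.mem_sdiff.1 hyP with ⟨hy1, hy2⟩
        rcases Finset.mem_union.1 hyV with hy | hy
        · exact hy2 (Finset.erase_subset _ _ hy)
        · rw [Finset.mem_singleton.1 hy] at hy1
          exact hzt hy1
      have hwin : ∀ y ∈ T 0, (ggF T (t+1) n y ∈ V ↔ y ∈ S0) := by
        intro y hy0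
        have hyn : y ∈ T n := hTn ▸ hy0
        set Hy := ggF T (t+1) n y with hHyDef
        have hHyt1 : Hy ∈ T (t+1) := ggF_maps T h4 hd (by omega) y hyn
        have hHyz : Hy = z ↔ y = z := by
          constructor
          · intro h; exact hHinj hyn (hTn ▸ hz0) (h.trans hHz.symm)
          · rintro rfl; exact hHz
        have hHyc : Hy = c ↔ y = ga := by
          constructor
          · intro h; exact hHinj hyn (hTn ▸ hga0) h
          · rintro rfl; rfl
        have hHyP : Hy ∈ P ↔ (y ≠ z ∧ G y ∈ S0) := by
          rw [hPDef, Finset.mem_filter]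
          constructor
          · rintro ⟨h1, h3⟩
            have hHne : Hy ≠ z := fun hcon => hzt (hcon ▸ h1)
            refine ⟨fun hcon => hHne (hHyz.2 hcon), ?_⟩
            rw [hcompz y hyn, ← hHyDef, ggF_succ_of_lt T (by omega),
              Function.comp_apply, sig_mem_of_mem T h1]
            exact h3
          · rintro ⟨h1, h2⟩
            have hHne : Hy ≠ z := fun hcon => h1 (hHyz.1 hcon)
            have hHyt : Hy ∈ T t := by
              by_contra hcon
              exact hHne (hent Hy hHyt1 hcon)
            refine ⟨hHyt, ?_⟩
            rw [hcompz y hyn, ← hHyDef, ggF_succ_of_lt T (by omega),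
              Function.comp_apply, sig_mem_of_mem T hHyt] at h2
            exact h2
        rw [hVDef, Finset.mem_union, Finset.mem_singleton, Finset.mem_erase, hHyP]
        constructor
        · rintro (⟨hc1, h1, h2⟩ | h)
          · rw [hS0Def, Finset.mem_sdiff]
            refine ⟨hy0, ?_⟩
            simp only [Finset.mem_insert, Finset.mem_singleton]
            rintro (hya | hyga)
            · rw [hya, ← hgaDef] at h2
              exact hgaS0 h2
            · exact hc1 (hHyc.2 hyga)
          · rw [hHyz.1 h]; exact hzS0
        · intro hyS0
          by_cases hyz : y = z
          · right; exact hHyz.2 hyz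
          · left
            refine ⟨fun hcon => ?_, hyz, ?_⟩
            · rw [hHyc.1 hcon] at hyS0
              exact hgaS0 hyS0
            · have hGy0 : G y ∈ T 0 := ggF_maps T h4 hd (Nat.zero_le n) y hyn
              rw [hS0Def, Finset.mem_sdiff]
              refine ⟨hGy0, ?_⟩
              simp only [Finset.mem_insert, Finset.mem_singleton]
              rintro (h | h)
              · exact hyz (hGinj hyn hzn (h.trans haDef))
              · have hya : y = a := hGinj hyn han (h.trans hgaDef)
                rw [hya] at hyS0
                exact haS0 hyS0
      refine ⟨Asel T t S0 V, fun j => asel_subset T t S0 V j,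
        fun j => asel_card T t S0 V h4 hd hS0sub hVsub hS0card hVcard, ?_, ?_⟩
      · intro j hj
        rcases eq_or_ne j t with rfl | hne
        · exact hedget
        · exact asel_disj T t S0 V h4 hd hne
      · have h0 : Asel T t S0 V 0 = S0 := by
          rw [Asel, if_pos Even.zero, Strj, if_pos (Nat.zero_le t)]
          ext y
          simp only [Finset.mem_filter, ggF_of_le T (le_refl 0), id_eq]
          exact ⟨fun h => h.2, fun h => ⟨hS0sub h, h⟩⟩
        have h1 : Asel T t S0 V n = S0 := by
          rw [Asel, if_pos hne, Strj, if_neg (by omega)]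
          ext y
          simp only [Finset.mem_filter]
          constructor
          · rintro ⟨hy, hy2⟩
            exact (hwin y (hTn ▸ hy)).1 hy2
          · intro hy
            have hy0 : y ∈ T 0 := hS0sub hy
            exact ⟨hTn ▸ hy0, (hwin y hy0).2 hy⟩
        rw [h0, h1]

end Drift

section CoreSelect

lemma val_succ {n : ℕ} [NeZero n] (w : ZMod n) : (w + 1).val = (w.val + 1) % n := by
  rw [ZMod.val_add, ZMod.val_one_eq_one_mod, Nat.add_mod_mod]

lemma core_select (n : ℕ) (hn0 : 0 < n) (hne : Even n) (T : ZMod n → Finset ℕ)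
    (h4 : ∀ i, (T i).card = 4) :
    ∃ A : ZMod n → Finset ℕ, (∀ i, A i ⊆ T i) ∧ (∀ i, (A i).card = 2) ∧
      (∀ i, Disjoint (A i) (A (i+1))) := by
  haveI : NeZero n := ⟨hn0.ne'⟩
  by_cases hc : ∀ i : ZMod n, ((T (i+1)) \ T i).card ≤ 1
  · -- drift case
    set TT : ℕ → Finset ℕ := fun j => T (j : ZMod n) with hTT
    have hTn : TT n = TT 0 := by simp [hTT]
    have h4' : ∀ j, (TT j).card = 4 := fun j => h4 _
    have hd' : ∀ j, ((TT (j+1)) \ TT j).card ≤ 1 := by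
      intro j
      have : ((j : ℕ)+1 : ZMod n) = (j : ZMod n) + 1 := by push_cast; ring
      simpa [hTT, this] using hc (j : ZMod n)
    obtain ⟨A, hAsub, hAcard, hAdisj, hAwrap⟩ := drift_select TT n hne hn0 hTn h4' hd'
    refine ⟨fun i => A i.val, ?_, fun i => hAcard i.val, ?_⟩
    · intro i
      have : ((i.val : ℕ) : ZMod n) = i := ZMod.natCast_rightInverse i
      simpa [hTT, this] using hAsub i.val
    · intro i
      show Disjoint (A i.val) (A (i + 1).val)
      have hval : (i + 1).val = (i.val + 1) % n := val_succ i
      have hlt : i.val < n := ZMod.val_lt i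
      rcases Nat.lt_or_ge (i.val + 1) n with h | h
      · have heq1 : (i + 1).val = i.val + 1 := by
          rw [hval, Nat.mod_eq_of_lt h]
        rw [heq1]
        exact hAdisj i.val hlt
      · have hieq : i.val = n - 1 := by omega
        have heq0 : (i + 1).val = 0 := by
          rw [hval, hieq]
          have : n - 1 + 1 = n := by omega
          rw [this, Nat.mod_self]
        rw [heq0, hieq, ← hAwrap]
        have hnn : n - 1 + 1 = n := by omega
        conv_rhs => rw [← hnn]
        exact hAdisj (n-1) (by omega)
  · -- jump case
    push_neg at hc
    obtain ⟨m, hm⟩ := hc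
    have hm2 : 2 ≤ ((T (m+1)) \ T m).card := hm
    set v : ℕ → ZMod n := fun j => m + 1 + (j : ZMod n) with hv
    have hchain : ∀ k : ℕ, ∃ B : ℕ → Finset ℕ,
        (∀ j ≤ k, B j ⊆ T (v j) ∧ (B j).card = 2) ∧
        (∀ j < k, Disjoint (B (j+1)) (B j)) ∧ B 0 ⊆ (T (m+1)) \ T m := by
      intro k
      induction k with
      | zero =>
          obtain ⟨B0, hB0sub, hB0card⟩ := Finset.exists_subset_card_eq hm2
          refine ⟨fun _ => B0, ?_, by omega, hB0sub⟩
          intro j hj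
          have hj0 : j = 0 := by omega
          subst hj0
          constructor
          · intro x hx
            have := hB0sub hx
            rw [Finset.mem_sdiff] at this
            simpa [hv] using this.1
          · exact hB0card
      | succ k ih =>
          obtain ⟨B, hBsub, hBdisj, hB0⟩ := ih
          have hex : 2 ≤ ((T (v (k+1))) \ B k).card := by
            have h1 : (B k).card = 2 := (hBsub k (le_refl k)).2
            have h2 := Finset.le_card_sdiff (B k) (T (v (k+1)))
            rw [h4, h1] at h2
            omega
          obtain ⟨Bn, hBnsub, hBncard⟩ := Finset.exists_subset_card_eq hex
          refine ⟨fun j => if j = k+1 then Bn else B j, ?_, ?_, ?_⟩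
          · intro j hj
            by_cases h : j = k+1
            · subst h
              simp only [if_pos rfl]
              constructor
              · intro x hx
                exact (Finset.mem_sdiff.1 (hBnsub hx)).1
              · exact hBncard
            · simp only [if_neg h]
              exact hBsub j (by omega)
          · intro j hj
            by_cases h : j + 1 = k + 1
            · have : j = k := by omega
              subst this
              simp only [if_pos rfl, if_neg (by omega : ¬ j = j + 1)]
              rw [Finset.disjoint_left]
              intro x hx
              exact fun hxB => (Finset.mem_sdiff.1 (hBnsub hx)).2 hxB
            · simp only [if_neg h, if_neg (by omega : ¬ j = k + 1)]
              exact hBdisj j (by omega)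
          · simp only [if_neg (by omega : ¬ (0:ℕ) = k + 1)]
            exact hB0
    obtain ⟨B, hBsub, hBdisj, hB0⟩ := hchain (n-1)
    refine ⟨fun i => B ((i - (m+1)).val), ?_, ?_, ?_⟩
    · intro i
      have h1 := (hBsub ((i - (m+1)).val) (by have := ZMod.val_lt (i - (m+1)); omega)).1
      have h2 : v ((i - (m+1)).val) = i := by
        rw [hv]
        simp only []
        rw [ZMod.natCast_rightInverse (i - (m+1))]
        ring
      rwa [h2] at h1
    · intro i
      exact (hBsub _ (by have := ZMod.val_lt (i - (m+1)); omega)).2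
    · intro i
      show Disjoint (B ((i - (m+1)).val)) (B (((i + 1) - (m+1)).val))
      have heq : (i + 1) - (m+1) = (i - (m+1)) + 1 := by ring
      set j := (i - (m+1)).val with hj
      have hjlt : j < n := ZMod.val_lt _
      have hval : ((i + 1) - (m+1)).val = (j + 1) % n := by
        rw [heq, val_succ, hj]
      rcases Nat.lt_or_ge (j + 1) n with h | h
      · have heq1 : ((i + 1) - (m+1)).val = j + 1 := by rw [hval, Nat.mod_eq_of_lt h]
        rw [heq1]
        exact (hBdisj j (by omega)).symm
      · have hjeq : j = n - 1 := by omega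
        have heq0 : ((i + 1) - (m+1)).val = 0 := by
          rw [hval, hjeq]
          have : n - 1 + 1 = n := by omega
          rw [this, Nat.mod_self]
        rw [heq0]
        have hBj : B j ⊆ T m := by
          have h1 := (hBsub j (by omega)).1
          have h2 : v j = m := by
            rw [hv, hjeq]
            simp only []
            have : ((n - 1 : ℕ) : ZMod n) = (n : ZMod n) - 1 := by
              rw [Nat.cast_sub (by omega : 1 ≤ n)]
              norm_num
            rw [this, ZMod.natCast_self]
            ring
          rwa [h2] at h1
        rw [Finset.disjoint_left]
        intro x hx hx0
        exact (Finset.mem_sdiff.1 (hB0 hx0)).2 (hBj hx)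

end CoreSelect

section Pad

lemma padded_select (n : ℕ) (hn0 : 0 < n) (hne : Even n)
    (Fu : ZMod n → Finset (Fin 14)) (hFu : ∀ i, (Fu i).card ≤ 4) :
    ∃ A : ZMod n → Finset (Fin 14), (∀ i, A i ⊆ Fu i) ∧
      (∀ i, (A i).card = (Fu i).card - 2) ∧ (∀ i, Disjoint (A i) (A (i+1))) := by
  haveI : NeZero n := ⟨hn0.ne'⟩
  set emb : Fin 14 ↪ ℕ := ⟨Fin.val, Fin.val_injective⟩ with hemb
  set padf : ZMod n → Finset ℕ :=
    fun i => (Finset.range (4 - (Fu i).card)).map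
      ⟨fun r => 14 + 4 * i.val + r, add_right_injective _⟩ with hpadf
  set T : ZMod n → Finset ℕ := fun i => (Fu i).map emb ∪ padf i with hT
  have hmap_lt : ∀ i : ZMod n, ∀ x ∈ (Fu i).map emb, x < 14 := by
    intro i x hx
    rcases Finset.mem_map.1 hx with ⟨v, hv, rfl⟩
    exact v.2
  have hpad_ge : ∀ i : ZMod n, ∀ x ∈ padf i, 14 ≤ x := by
    intro i x hx
    rcases Finset.mem_map.1 hx with ⟨r, hr, rfl⟩
    simp only [Function.Embedding.coeFn_mk]
    omega
  have hdisjmp : ∀ i : ZMod n, Disjoint ((Fu i).map emb) (padf i) := by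
    intro i
    rw [Finset.disjoint_left]
    intro x hx hx2
    have := hmap_lt i x hx
    have := hpad_ge i x hx2
    omega
  have h4 : ∀ i, (T i).card = 4 := by
    intro i
    rw [hT]
    simp only []
    rw [Finset.card_union_of_disjoint (hdisjmp i), Finset.card_map, Finset.card_map,
      Finset.card_range]
    have := hFu i
    omega
  obtain ⟨A', hA'sub, hA'card, hA'disj⟩ := core_select n hn0 hne T h4
  have hANcard : ∀ i : ZMod n, (Fu i).card - 2 ≤ (A' i ∩ (Fu i).map emb).card := by
    intro i
    have hsplit := Finset.card_inter_add_card_sdiff (A' i) ((Fu i).map emb)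
    have hsub : A' i \ (Fu i).map emb ⊆ padf i := by
      intro x hx
      rcases Finset.mem_sdiff.1 hx with ⟨hx1, hx2⟩
      have := hA'sub i hx1
      rw [hT] at this
      simp only [Finset.mem_union] at this
      tauto
    have hle : (A' i \ (Fu i).map emb).card ≤ 4 - (Fu i).card := by
      calc (A' i \ (Fu i).map emb).card ≤ (padf i).card := Finset.card_le_card hsub
        _ = 4 - (Fu i).card := by rw [hpadf]; simp
    have h2 := hA'card i
    have := hFu i
    omega
  choose AA hAAsub hAAcard using
    fun i => Finset.exists_subset_card_eq (hANcard i)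
  refine ⟨fun i => (Fu i).filter (fun v => (v.val : ℕ) ∈ AA i), ?_, ?_, ?_⟩
  · intro i
    exact Finset.filter_subset _ _
  · intro i
    rw [← hAAcard i]
    apply Finset.card_bij (fun v _ => (v.val : ℕ))
    · intro v hv
      exact (Finset.mem_filter.1 hv).2
    · intro v1 hv1 v2 hv2 h
      exact Fin.val_injective h
    · intro y hy
      have hy2 : y ∈ (Fu i).map emb := (Finset.inter_subset_right (hAAsub i hy))
      rcases Finset.mem_map.1 hy2 with ⟨v, hv, rfl⟩
      exact ⟨v, Finset.mem_filter.2 ⟨hv, hy⟩, rfl⟩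
  · intro i
    rw [Finset.disjoint_left]
    intro v hv1 hv2
    have h1 : (v.val : ℕ) ∈ A' i :=
      Finset.inter_subset_left (hAAsub i (Finset.mem_filter.1 hv1).2)
    have h2 : (v.val : ℕ) ∈ A' (i+1) :=
      Finset.inter_subset_left (hAAsub (i+1) (Finset.mem_filter.1 hv2).2)
    exact Finset.disjoint_left.1 (hA'disj i) h1 h2

end Pad

section Assemble

lemma card_compl14 (s : Finset (Fin 14)) : (Finset.univ \ s).card = 14 - s.card := by
  rw [Finset.card_sdiff_of_subset (Finset.subset_univ s), Finset.card_univ, Fintype.card_fin]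

lemma assemble (n : ℕ) (hn : 4 ≤ n) (Fu : ℕ → Finset (Fin 14)) (A : ℕ → Finset (Fin 14))
    (hAsub : ∀ j, A j ⊆ Fu j) (hAcard : ∀ j, (A j).card = (Fu j).card - 2)
    (hFu4 : ∀ j, (Fu j).card ≤ 4)
    (hdisj : ∀ j, j < n - 1 → Disjoint (A j) (A (j+1)))
    (hwrap : Disjoint (A (n-1)) (A 0)) :
    ∃ fv fu : ℕ → Finset (Fin 14),
      (∀ j, j < n → (fv j).card = 5) ∧ (∀ j, j < n → (fu j).card = 7) ∧
      (∀ j, j < n → Disjoint (fu j) (Fu j)) ∧ (∀ j, j < n → Disjoint (fv j) (fu j)) ∧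
      (∀ j, j < n - 1 → Disjoint (fv j) (fv (j+1))) ∧ Disjoint (fv (n-1)) (fv 0) := by
  have hA2 : ∀ j, (A j).card ≤ 2 := by
    intro j
    have := hAcard j
    have := hFu4 j
    omega
  -- choose the marker x
  have hxex : (Finset.univ \ (A 0 ∪ A 1 ∪ A (n-3) ∪ A (n-2) ∪ A (n-1))).Nonempty := by
    rw [← Finset.card_pos, card_compl14]
    have h1 : (A 0 ∪ A 1 ∪ A (n-3) ∪ A (n-2) ∪ A (n-1)).card ≤ 10 := by
      calc (A 0 ∪ A 1 ∪ A (n-3) ∪ A (n-2) ∪ A (n-1)).card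
          ≤ (A 0 ∪ A 1 ∪ A (n-3) ∪ A (n-2)).card + (A (n-1)).card := Finset.card_union_le _ _
        _ ≤ (A 0 ∪ A 1 ∪ A (n-3)).card + (A (n-2)).card + (A (n-1)).card := by
            have := Finset.card_union_le (A 0 ∪ A 1 ∪ A (n-3)) (A (n-2)); omega
        _ ≤ (A 0 ∪ A 1).card + (A (n-3)).card + (A (n-2)).card + (A (n-1)).card := by
            have := Finset.card_union_le (A 0 ∪ A 1) (A (n-3)); omega
        _ ≤ (A 0).card + (A 1).card + (A (n-3)).card + (A (n-2)).card + (A (n-1)).card := by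
            have := Finset.card_union_le (A 0) (A 1); omega
        _ ≤ 10 := by
            have := hA2 0; have := hA2 1; have := hA2 (n-3); have := hA2 (n-2)
            have := hA2 (n-1); omega
    omega
  obtain ⟨x, hx⟩ := hxex
  rw [Finset.mem_sdiff] at hx
  have hx' := hx.2
  simp only [Finset.mem_union, not_or] at hx'
  obtain ⟨⟨⟨⟨hxA0, hxA1⟩, hxA3⟩, hxA2'⟩, hxA1'⟩ := hx'
  -- fv0
  have hpool0 : 4 - (A 0).card ≤ (Finset.univ \ (A 0 ∪ {x} ∪ A 1 ∪ A (n-1))).card := by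
    rw [card_compl14]
    have h1 : (A 0 ∪ {x} ∪ A 1 ∪ A (n-1)).card ≤ 7 := by
      calc (A 0 ∪ {x} ∪ A 1 ∪ A (n-1)).card
          ≤ (A 0 ∪ {x} ∪ A 1).card + (A (n-1)).card := Finset.card_union_le _ _
        _ ≤ (A 0 ∪ {x}).card + (A 1).card + (A (n-1)).card := by
            have := Finset.card_union_le (A 0 ∪ {x}) (A 1); omega
        _ ≤ (A 0).card + 1 + (A 1).card + (A (n-1)).card := by
            have := Finset.card_union_le (A 0) ({x} : Finset (Fin 14))
            simp only [Finset.card_singleton] at this; omega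
        _ ≤ 7 := by have := hA2 0; have := hA2 1; have := hA2 (n-1); omega
    omega
  obtain ⟨pad0, hpad0sub, hpad0card⟩ := Finset.exists_subset_card_eq hpool0
  have hpad0 : ∀ y ∈ pad0, y ∉ A 0 ∧ y ≠ x ∧ y ∉ A 1 ∧ y ∉ A (n-1) := by
    intro y hy
    have := hpad0sub hy
    rw [Finset.mem_sdiff] at this
    have h2 := this.2
    simp only [Finset.mem_union, not_or, Finset.mem_singleton] at h2
    tauto
  set fv0 : Finset (Fin 14) := A 0 ∪ insert x pad0 with hfv0
  have hxpad0 : x ∉ pad0 := fun h => ((hpad0 x h).2.1) rfl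
  have hfv0card : fv0.card = 5 := by
    rw [hfv0, Finset.card_union_of_disjoint, Finset.card_insert_of_notMem hxpad0,
      hpad0card]
    · have := hA2 0; have h0 := hAcard 0; omega
    · rw [Finset.disjoint_right]
      intro y hy
      rcases Finset.mem_insert.1 hy with rfl | hy
      · exact hxA0
      · exact (hpad0 y hy).1
  have hfv0A : A 0 ⊆ fv0 := Finset.subset_union_left
  have hxfv0 : x ∈ fv0 := Finset.mem_union_right _ (Finset.mem_insert_self _ _)
  have hfv0A1 : Disjoint fv0 (A 1) := by
    rw [Finset.disjoint_left]
    intro y hy hy2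
    rcases Finset.mem_union.1 hy with hy | hy
    · exact Finset.disjoint_left.1 (hdisj 0 (by omega)) hy (by simpa using hy2)
    · rcases Finset.mem_insert.1 hy with rfl | hy
      · exact hxA1 hy2
      · exact (hpad0 y hy).2.2.1 hy2
  have hfv0Alast : Disjoint fv0 (A (n-1)) := by
    rw [Finset.disjoint_left]
    intro y hy hy2
    rcases Finset.mem_union.1 hy with hy | hy
    · exact Finset.disjoint_left.1 hwrap.symm hy hy2
    · rcases Finset.mem_insert.1 hy with rfl | hy
      · exact hxA1' hy2
      · exact (hpad0 y hy).2.2.2 hy2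
  -- the middle chain
  have hchain : ∀ k, k ≤ n - 3 → ∃ C : ℕ → Finset (Fin 14), C 0 = fv0 ∧
      (∀ j, 1 ≤ j → j ≤ k →
        ((C j).card = 5 ∧ A j ⊆ C j ∧ Disjoint (C j) (A (j+1)) ∧
          Disjoint (C j) (C (j-1)) ∧ (x ∈ C j → x ∈ A j))) := by
    intro k
    induction k with
    | zero => intro _; exact ⟨fun _ => fv0, rfl, by omega⟩
    | succ k ih =>
        intro hk
        obtain ⟨C, hC0, hCP⟩ := ih (by omega)
        -- facts about C k
        have hCkcard : (C k).card = 5 := by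
          rcases Nat.eq_zero_or_pos k with rfl | hk0
          · rw [hC0]; exact hfv0card
          · exact (hCP k hk0 (le_refl k)).1
        have hCkA : Disjoint (C k) (A (k+1)) := by
          rcases Nat.eq_zero_or_pos k with rfl | hk0
          · rw [hC0]; exact hfv0A1
          · exact (hCP k hk0 (le_refl k)).2.2.1
        have hpool : 5 - (A (k+1)).card ≤
            (Finset.univ \ (C k ∪ A (k+1) ∪ A (k+2) ∪ {x})).card := by
          rw [card_compl14]
          have h1 : (C k ∪ A (k+1) ∪ A (k+2) ∪ {x}).card ≤ 8 + (A (k+1)).card := by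
            calc (C k ∪ A (k+1) ∪ A (k+2) ∪ {x}).card
                ≤ (C k ∪ A (k+1) ∪ A (k+2)).card + 1 := by
                  have := Finset.card_union_le (C k ∪ A (k+1) ∪ A (k+2))
                    ({x} : Finset (Fin 14))
                  simp only [Finset.card_singleton] at this; omega
              _ ≤ (C k ∪ A (k+1)).card + (A (k+2)).card + 1 := by
                  have := Finset.card_union_le (C k ∪ A (k+1)) (A (k+2)); omega
              _ ≤ (C k).card + (A (k+1)).card + (A (k+2)).card + 1 := by
                  have := Finset.card_union_le (C k) (A (k+1)); omega
              _ ≤ 8 + (A (k+1)).card := by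
                  have := hA2 (k+2); omega
          have := hA2 (k+1)
          omega
        obtain ⟨pad, hpadsub, hpadcard⟩ := Finset.exists_subset_card_eq hpool
        have hpadf : ∀ y ∈ pad, y ∉ C k ∧ y ∉ A (k+1) ∧ y ∉ A (k+2) ∧ y ≠ x := by
          intro y hy
          have := hpadsub hy
          rw [Finset.mem_sdiff] at this
          have h2 := this.2
          simp only [Finset.mem_union, not_or, Finset.mem_singleton] at h2
          tauto
        refine ⟨fun j => if j = k+1 then A (k+1) ∪ pad else C j, by
          simp only [if_neg (by omega : ¬ (0:ℕ) = k+1)]; exact hC0, ?_⟩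
        intro j hj1 hjk
        by_cases hj : j = k+1
        · subst hj
          simp only [if_pos rfl, (show k + 1 - 1 = k by omega),
            if_neg (show ¬ k = k+1 by omega), if_true, eq_self_iff_true]
          have hAdpad : Disjoint (A (k+1)) pad := by
            rw [Finset.disjoint_right]
            exact fun y hy => (hpadf y hy).2.1
          refine ⟨?_, Finset.subset_union_left, ?_, ?_, ?_⟩
          · rw [Finset.card_union_of_disjoint hAdpad, hpadcard]
            have := hA2 (k+1); omega
          · rw [Finset.disjoint_left]
            intro y hy hy2
            rcases Finset.mem_union.1 hy with hy | hy
            · exact Finset.disjoint_left.1 (hdisj (k+1) (by omega)) hy hy2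
            · exact (hpadf y hy).2.2.1 hy2
          · rw [Finset.disjoint_left]
            intro y hy hy2
            rcases Finset.mem_union.1 hy with hy | hy
            · exact Finset.disjoint_left.1 hCkA.symm hy hy2
            · exact (hpadf y hy).1 hy2
          · intro hxmem
            rcases Finset.mem_union.1 hxmem with hy | hy
            · exact hy
            · exact absurd rfl (hpadf x hy).2.2.2
        · simp only [if_neg hj, if_neg (by omega : ¬ j - 1 = k+1)]
          exact hCP j hj1 (by omega)
  obtain ⟨C, hC0, hCP⟩ := hchain (n-3) (le_refl _)
  -- facts about the end of the chain
  have hCend := hCP (n-3) (by omega) (le_refl _)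
  have he1 : n - 3 + 1 = n - 2 := by omega
  have he2 : n - 2 + 1 = n - 1 := by omega
  have hCecard : (C (n-3)).card = 5 := hCend.1
  have hCeA2 : Disjoint (C (n-3)) (A (n-2)) := by
    have := hCend.2.2.1
    rwa [he1] at this
  have hxCe : x ∉ C (n-3) := fun h => hxA3 (hCend.2.2.2.2 h)
  -- fvB at index n-2
  have hpoolB : 4 - (A (n-2)).card ≤
      (Finset.univ \ (C (n-3) ∪ A (n-2) ∪ A (n-1) ∪ {x})).card := by
    rw [card_compl14]
    have h1 : (C (n-3) ∪ A (n-2) ∪ A (n-1) ∪ {x}).card ≤ 8 + (A (n-2)).card := by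
      calc (C (n-3) ∪ A (n-2) ∪ A (n-1) ∪ {x}).card
          ≤ (C (n-3) ∪ A (n-2) ∪ A (n-1)).card + 1 := by
            have := Finset.card_union_le (C (n-3) ∪ A (n-2) ∪ A (n-1))
              ({x} : Finset (Fin 14))
            simp only [Finset.card_singleton] at this; omega
        _ ≤ (C (n-3) ∪ A (n-2)).card + (A (n-1)).card + 1 := by
            have := Finset.card_union_le (C (n-3) ∪ A (n-2)) (A (n-1)); omega
        _ ≤ (C (n-3)).card + (A (n-2)).card + (A (n-1)).card + 1 := by
            have := Finset.card_union_le (C (n-3)) (A (n-2)); omega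
        _ ≤ 8 + (A (n-2)).card := by have := hA2 (n-1); omega
    have := hA2 (n-2)
    omega
  obtain ⟨padB, hpadBsub, hpadBcard⟩ := Finset.exists_subset_card_eq hpoolB
  have hpadBf : ∀ y ∈ padB, y ∉ C (n-3) ∧ y ∉ A (n-2) ∧ y ∉ A (n-1) ∧ y ≠ x := by
    intro y hy
    have := hpadBsub hy
    rw [Finset.mem_sdiff] at this
    have h2 := this.2
    simp only [Finset.mem_union, not_or, Finset.mem_singleton] at h2
    tauto
  set fvB : Finset (Fin 14) := A (n-2) ∪ insert x padB with hfvB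
  have hxpadB : x ∉ padB := fun h => (hpadBf x h).2.2.2 rfl
  have hfvBcard : fvB.card = 5 := by
    rw [hfvB, Finset.card_union_of_disjoint, Finset.card_insert_of_notMem hxpadB,
      hpadBcard]
    · have := hA2 (n-2); have h0 := hAcard (n-2); omega
    · rw [Finset.disjoint_right]
      intro y hy
      rcases Finset.mem_insert.1 hy with rfl | hy
      · exact hxA2'
      · exact (hpadBf y hy).2.1
  have hfvBA : A (n-2) ⊆ fvB := Finset.subset_union_left
  have hxfvB : x ∈ fvB := Finset.mem_union_right _ (Finset.mem_insert_self _ _)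
  have hfvBCe : Disjoint (C (n-3)) fvB := by
    rw [Finset.disjoint_right]
    intro y hy hy2
    rcases Finset.mem_union.1 hy with hy | hy
    · exact Finset.disjoint_left.1 hCeA2 hy2 hy
    · rcases Finset.mem_insert.1 hy with rfl | hy
      · exact hxCe hy2
      · exact (hpadBf y hy).1 hy2
  have hfvBAlast : Disjoint fvB (A (n-1)) := by
    rw [Finset.disjoint_left]
    intro y hy hy2
    rcases Finset.mem_union.1 hy with hy | hy
    · have hd2 := hdisj (n-2) (by omega)
      rw [he2] at hd2
      exact Finset.disjoint_left.1 hd2 hy hy2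
    · rcases Finset.mem_insert.1 hy with rfl | hy
      · exact hxA1' hy2
      · exact (hpadBf y hy).2.2.1 hy2
  -- fvC at index n-1
  have hxboth : x ∈ fvB ∩ C 0 := Finset.mem_inter.2 ⟨hxfvB, by rw [hC0]; exact hxfv0⟩
  have hpoolC : 5 - (A (n-1)).card ≤
      (Finset.univ \ (fvB ∪ C 0 ∪ A (n-1))).card := by
    rw [card_compl14]
    have hu9 : (fvB ∪ C 0).card ≤ 9 := by
      have := Finset.card_union_add_card_inter fvB (C 0)
      have hint : 1 ≤ (fvB ∩ C 0).card := Finset.card_pos.2 ⟨x, hxboth⟩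
      have hc0 : (C 0).card = 5 := by rw [hC0]; exact hfv0card
      omega
    have h1 : (fvB ∪ C 0 ∪ A (n-1)).card ≤ 9 + (A (n-1)).card := by
      have := Finset.card_union_le (fvB ∪ C 0) (A (n-1)); omega
    have := hA2 (n-1)
    omega
  obtain ⟨padC, hpadCsub, hpadCcard⟩ := Finset.exists_subset_card_eq hpoolC
  have hpadCf : ∀ y ∈ padC, y ∉ fvB ∧ y ∉ C 0 ∧ y ∉ A (n-1) := by
    intro y hy
    have := hpadCsub hy
    rw [Finset.mem_sdiff] at this
    have h2 := this.2
    simp only [Finset.mem_union, not_or] at h2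
    tauto
  set fvC : Finset (Fin 14) := A (n-1) ∪ padC with hfvC
  have hfvCcard : fvC.card = 5 := by
    rw [hfvC, Finset.card_union_of_disjoint, hpadCcard]
    · have := hA2 (n-1); have h0 := hAcard (n-1); omega
    · rw [Finset.disjoint_right]
      exact fun y hy => (hpadCf y hy).2.2
  have hfvCA : A (n-1) ⊆ fvC := Finset.subset_union_left
  have hfvCB : Disjoint fvB fvC := by
    rw [Finset.disjoint_right]
    intro y hy hy2
    rcases Finset.mem_union.1 hy with hy | hy
    · exact Finset.disjoint_left.1 hfvBAlast hy2 hy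
    · exact (hpadCf y hy).1 hy2
  have hfvC0 : Disjoint fvC (C 0) := by
    rw [Finset.disjoint_left]
    intro y hy hy2
    rcases Finset.mem_union.1 hy with hy | hy
    · rw [hC0] at hy2
      exact Finset.disjoint_left.1 hfv0Alast hy2 hy
    · exact (hpadCf y hy).2.1 hy2
  -- the assembled fv
  set F : ℕ → Finset (Fin 14) :=
    fun j => if j = n-1 then fvC else if j = n-2 then fvB else C j with hF
  have hFcard : ∀ j, j < n → (F j).card = 5 := by
    intro j hj
    rw [hF]
    simp only []
    by_cases h1 : j = n-1
    · rw [if_pos h1]; exact hfvCcard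
    · rw [if_neg h1]
      by_cases h2 : j = n-2
      · rw [if_pos h2]; exact hfvBcard
      · rw [if_neg h2]
        rcases Nat.eq_zero_or_pos j with rfl | hj0
        · rw [hC0]; exact hfv0card
        · exact (hCP j hj0 (by omega)).1
  have hFA : ∀ j, j < n → A j ⊆ F j := by
    intro j hj
    rw [hF]
    simp only []
    by_cases h1 : j = n-1
    · rw [if_pos h1, h1]; exact hfvCA
    · rw [if_neg h1]
      by_cases h2 : j = n-2
      · rw [if_pos h2, h2]; exact hfvBA
      · rw [if_neg h2]
        rcases Nat.eq_zero_or_pos j with rfl | hj0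
        · rw [hC0]; exact hfv0A
        · exact (hCP j hj0 (by omega)).2.1
  have hFedge : ∀ j, j < n - 1 → Disjoint (F j) (F (j+1)) := by
    intro j hj
    rw [hF]
    simp only []
    by_cases h1 : j = n-2
    · rw [if_neg (by omega : ¬ j = n-1), if_pos h1, if_pos (show j+1 = n-1 by omega)]
      exact hfvCB
    · by_cases h4 : j + 1 = n - 2
      · rw [if_neg (by omega : ¬ j = n-1), if_neg h1,
          if_neg (by omega : ¬ j + 1 = n-1), if_pos h4,
          (show j = n - 3 by omega)]
        exact hfvBCe
      · rw [if_neg (by omega : ¬ j = n-1), if_neg h1,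
          if_neg (by omega : ¬ j + 1 = n-1), if_neg h4]
        have hP := hCP (j+1) (by omega) (by omega)
        have hd5 := hP.2.2.2.1
        simpa using hd5.symm
  have hFwrap : Disjoint (F (n-1)) (F 0) := by
    rw [hF]
    simp only [if_pos rfl, if_true, eq_self_iff_true]
    rw [if_neg (by omega : ¬ (0:ℕ) = n-1), if_neg (by omega : ¬ (0:ℕ) = n-2)]
    exact hfvC0
  -- the fu sets
  have hfuex : ∀ j, ∃ S : Finset (Fin 14),
      j < n → (S.card = 7 ∧ S ⊆ Finset.univ \ (F j ∪ Fu j)) := by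
    intro j
    by_cases hj : j < n
    · have hsub2 : Fu j \ F j ⊆ Fu j \ A j := by
        intro y hy
        rw [Finset.mem_sdiff] at hy ⊢
        exact ⟨hy.1, fun h => hy.2 (hFA j hj h)⟩
      have hcard2 : (Fu j \ A j).card ≤ 2 := by
        rw [Finset.card_sdiff_of_subset (hAsub j), hAcard j]
        have := hFu4 j
        omega
      have hcardU : (F j ∪ Fu j).card ≤ 7 := by
        rw [← Finset.union_sdiff_self_eq_union,
          Finset.card_union_of_disjoint (Finset.disjoint_sdiff)]
        have h1 := Finset.card_le_card hsub2
        have h2 := hFcard j hj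
        omega
      have hpool : 7 ≤ (Finset.univ \ (F j ∪ Fu j)).card := by
        rw [card_compl14]; omega
      obtain ⟨S, hSsub, hScard⟩ := Finset.exists_subset_card_eq hpool
      exact ⟨S, fun _ => ⟨hScard, hSsub⟩⟩
    · exact ⟨∅, fun h => absurd h hj⟩
  choose fu hfu using hfuex
  refine ⟨F, fu, hFcard, fun j hj => (hfu j hj).1, ?_, ?_, hFedge, hFwrap⟩
  · intro j hj
    rw [Finset.disjoint_left]
    intro y hy hy2
    have := (hfu j hj).2 hy
    rw [Finset.mem_sdiff] at this
    exact this.2 (Finset.mem_union_right _ hy2)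
  · intro j hj
    rw [Finset.disjoint_right]
    intro y hy hy2
    have := (hfu j hj).2 hy
    rw [Finset.mem_sdiff] at this
    exact this.2 (Finset.mem_union_left _ hy2)

end Assemble

end CycleAvoid

/-- Let `G` be obtained from an even cycle `v₀v₁...v_{2k-1}v₀` (`k ≥ 2`, vertices
indexed by `ZMod (2k)`) by attaching a pendant leaf `u_i` to each `v_i`. Each cycle
vertex has degree `3` and each leaf degree `1`. If `|F(v_i)| ≤ 6 − 2·3`,
`|F(u_i)| ≤ 6 − 2·1` and `F(u_i) ∩ F(v_i) = ∅`, then there is an `F`-avoiding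
coloring `f` with `|f(v_i)| = 8 − 3 = 5` and `|f(u_i)| = 8 − 1 = 7`. -/
theorem cycle_with_leaves_avoiding_coloring (k : ℕ) (hk : 2 ≤ k)
    (Fv Fu : ZMod (2 * k) → Finset (Fin 14))
    (hFv : ∀ i, (Fv i).card ≤ 6 - 2 * 3)
    (hFu : ∀ i, (Fu i).card ≤ 6 - 2 * 1)
    (hFdisj : ∀ i, Disjoint (Fu i) (Fv i)) :
    ∃ fv fu : ZMod (2 * k) → Finset (Fin 14),
      (∀ i, (fv i).card = 5) ∧ (∀ i, (fu i).card = 7) ∧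
      (∀ i, Disjoint (fv i) (Fv i)) ∧ (∀ i, Disjoint (fu i) (Fu i)) ∧
      (∀ i, Disjoint (fv i) (fv (i + 1))) ∧
      (∀ i, Disjoint (fv i) (fu i)) := by
  haveI : NeZero (2 * k) := ⟨by omega⟩
  have hn4 : 4 ≤ 2 * k := by omega
  have hFv0 : ∀ i, Fv i = ∅ := by
    intro i
    have := hFv i
    norm_num at this
    exact this
  have hFu4 : ∀ i, (Fu i).card ≤ 4 := by
    intro i
    have := hFu i
    norm_num at this
    exact this
  obtain ⟨A, hAsub, hAcard, hAdisj⟩ :=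
    CycleAvoid.padded_select (2*k) (by omega) (even_two_mul k) Fu hFu4
  set FuN : ℕ → Finset (Fin 14) := fun j => Fu (j : ZMod (2*k)) with hFuN
  set AN : ℕ → Finset (Fin 14) := fun j => A (j : ZMod (2*k)) with hAN
  have hdisjN : ∀ j, j < 2*k - 1 → Disjoint (AN j) (AN (j+1)) := by
    intro j hj
    have hcast : ((j+1 : ℕ) : ZMod (2*k)) = (j : ZMod (2*k)) + 1 := by push_cast; ring
    rw [hAN]
    simp only []
    rw [hcast]
    exact hAdisj (j : ZMod (2*k))
  have hwrapN : Disjoint (AN (2*k-1)) (AN 0) := by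
    rw [hAN]
    simp only [Nat.cast_zero]
    have hcast : ((2*k-1 : ℕ) : ZMod (2*k)) + 1 = 0 := by
      have h' : ((2*k-1+1 : ℕ) : ZMod (2*k)) = ((2*k-1 : ℕ) : ZMod (2*k)) + 1 := by
        push_cast; ring
      rw [← h', (show 2*k-1+1 = 2*k by omega), ZMod.natCast_self]
    have := hAdisj ((2*k-1 : ℕ) : ZMod (2*k))
    rwa [hcast] at this
  obtain ⟨fvN, fuN, h5, h7, hfuFu, hfvfu, hedge, hwrapF⟩ :=
    CycleAvoid.assemble (2*k) hn4 FuN AN (fun j => hAsub _) (fun j => hAcard _)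
      (fun j => hFu4 _) hdisjN hwrapN
  have hvlt : ∀ i : ZMod (2*k), i.val < 2*k := fun i => ZMod.val_lt i
  have hcastval : ∀ i : ZMod (2*k), ((i.val : ℕ) : ZMod (2*k)) = i :=
    fun i => ZMod.natCast_rightInverse i
  refine ⟨fun i => fvN i.val, fun i => fuN i.val, fun i => h5 i.val (hvlt i),
    fun i => h7 i.val (hvlt i), ?_, ?_, ?_, fun i => hfvfu i.val (hvlt i)⟩
  · intro i
    rw [hFv0 i]
    exact Finset.disjoint_empty_right _
  · intro i
    have := hfuFu i.val (hvlt i)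
    rw [hFuN] at this
    simp only [] at this
    rwa [hcastval i] at this
  · intro i
    show Disjoint (fvN i.val) (fvN (i+1).val)
    have hval : (i + 1).val = (i.val + 1) % (2*k) := CycleAvoid.val_succ i
    rcases Nat.lt_or_ge (i.val + 1) (2*k) with h | h
    · have heq1 : (i + 1).val = i.val + 1 := by rw [hval, Nat.mod_eq_of_lt h]
      rw [heq1]
      exact hedge i.val (by omega)
    · have hieq : i.val = 2*k - 1 := by have := hvlt i; omega
      have heq0 : (i + 1).val = 0 := by
        rw [hval, hieq, (show 2*k-1+1 = 2*k by omega), Nat.mod_self]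
      rw [heq0, hieq]
      exact hwrapF
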